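/- Let T be a finite nonempty tree and let γ be a graph automorphism of T with γ∘γ = id. Then either γ fixes some vertex of T (there exists a vertex v with γ(v) = v), or γ flips some edge of T (there exist adjacent vertices a, b with γ(a) = b and γ(b) = a). -/

import Mathlib

open SimpleGraph Walk

private lemma getVert_map_aux {V : Type} {T : SimpleGraph V} (f : T →g T) :
    ∀ {u v : V} (p : T.Walk u v) (i : ℕ), (p.map f).getVert i = f (p.getVert i) := by
  intro u v p
  induction p with
  | nil => intro i; simp [Walk.getVert]
  | cons h q ih =>
    intro i
    cases i with
    | zero => simp [Walk.getVert]
    | succ i => simpa using ih i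

private lemma key_aux {V : Type} {T : SimpleGraph V} (hacyc : T.IsAcyclic)
    (γ : T ≃g T) (hinv : ∀ x : V, γ (γ x) = x) :
    ∀ (n : ℕ) (v : V) (p : T.Walk v (γ v)), p.IsPath → p.length = n →
      (∃ v : V, γ v = v) ∨ ∃ a b : V, T.Adj a b ∧ γ a = b ∧ γ b = a := by
  intro n
  induction n using Nat.strong_induction_on with
  | _ n IH =>
    intro v p hp hlen
    match n, hlen with
    | 0, hlen =>
      left
      exact ⟨v, (Walk.eq_of_length_eq_zero hlen).symm⟩
    | 1, hlen =>
      right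
      refine ⟨v, γ v, ?_, rfl, hinv v⟩
      have hne : ¬ p.Nil := by rw [not_nil_iff_lt_length, hlen]; norm_num
      have : T.Adj v (p.getVert 1) := p.adj_snd hne
      rwa [show p.getVert 1 = γ v by rw [← hlen, p.getVert_length]] at this
    | (m + 2), hlen =>
      -- the image of p under γ equals the reverse of p
      have hqpath : ((p.map γ.toHom).copy rfl (hinv v)).IsPath :=
        (isPath_copy _ rfl (hinv v)).mpr
          (Walk.map_isPath_of_injective γ.toEquiv.injective hp)
      have huniq := isAcyclic_iff_path_unique.mp hacyc
        ⟨(p.map γ.toHom).copy rfl (hinv v), hqpath⟩ ⟨p.reverse, hp.reverse⟩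
      have heq : (p.map γ.toHom).copy rfl (hinv v) = p.reverse :=
        congrArg Subtype.val huniq
      have hgv : ∀ i : ℕ, γ (p.getVert i) = p.getVert (p.length - i) := by
        intro i
        have := congrArg (fun q => Walk.getVert q i) heq
        simpa [Walk.getVert_copy, getVert_map_aux, Walk.getVert_reverse] using this
      -- w is the second vertex of p; γ w is the second-to-last vertex
      have hw : γ (p.getVert 1) = p.getVert (m + 1) := by
        have := hgv 1
        rwa [hlen, show m + 2 - 1 = m + 1 from rfl] at this
      have hnp : ¬ p.Nil := by rw [not_nil_iff_lt_length, hlen]; omega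
      have hltail : p.tail.length = m + 1 := by
        have := length_tail_add_one hnp
        omega
      have hnrt : ¬ p.tail.reverse.Nil := by
        rw [not_nil_iff_lt_length, Walk.length_reverse, hltail]; omega
      -- the interior walk from γ w to w
      have hstart : p.tail.reverse.getVert 1 = γ (p.getVert 1) := by
        rw [Walk.getVert_reverse, hltail, show m + 1 - 1 = m from rfl,
          getVert_tail _]
        exact hw.symm
      have q2 : T.Walk (p.tail.reverse.getVert 1) (p.getVert 1) := p.tail.reverse.tail
      have hq2path : p.tail.reverse.tail.IsPath := ((hp.tail).reverse).tail
      have hq2len : p.tail.reverse.tail.length = m := by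
        have := length_tail_add_one hnrt
        rw [Walk.length_reverse, hltail] at this
        omega
      have q3 : T.Walk (p.getVert 1) (γ (p.getVert 1)) := (p.tail.reverse.tail.copy hstart rfl).reverse
      exact IH m (by omega) (p.getVert 1) ((p.tail.reverse.tail.copy hstart rfl).reverse)
        (((isPath_copy _ hstart rfl).mpr hq2path).reverse)
        (by rw [Walk.length_reverse, Walk.length_copy, hq2len])

/-- an involutive automorphism `γ` of a finite nonempty tree either fixes
a vertex or flips an edge. -/
theorem tree_involution_fixes_vertex_or_flips_edge {V : Type} [Fintype V] [Nonempty V]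
    (T : SimpleGraph V) (hconn : T.Connected) (hacyc : T.IsAcyclic)
    (γ : T ≃g T) (hinv : ∀ x : V, γ (γ x) = x) :
    (∃ v : V, γ v = v) ∨ ∃ a b : V, T.Adj a b ∧ γ a = b ∧ γ b = a := by
  classical
  obtain ⟨v⟩ := (inferInstance : Nonempty V)
  obtain ⟨w⟩ := hconn v (γ v)
  exact key_aux hacyc γ hinv w.toPath.1.length v w.toPath.1 w.toPath.2 rfl
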